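/- Let G be a connected C₄-free graph of order n and minimum degree δ ≥ 3. Then diam(G) ≤ ⌊5n/(δ² − 2⌊δ/2⌋ + 1)⌋. -/

import Mathlib

open SimpleGraph Finset

lemma dist_getVert_left {V : Type*} {G : SimpleGraph V} (hconn : G.Connected)
    {u v : V} (p : G.Walk u v) (k : ℕ) : G.dist u (p.getVert k) ≤ k := by
  induction p generalizing k with
  | nil => simp [SimpleGraph.Walk.getVert_of_length_le _ (by simp : (SimpleGraph.Walk.nil).length ≤ k), SimpleGraph.dist_self]
  | cons h q ih =>
    cases k with
    | zero => simp [SimpleGraph.Walk.getVert_zero]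
    | succ k =>
      rw [SimpleGraph.Walk.getVert_cons_succ]
      calc G.dist _ _ ≤ G.dist _ _ + G.dist _ _ := hconn.dist_triangle
        _ ≤ 1 + k := by
            gcongr
            · simpa using SimpleGraph.dist_le (SimpleGraph.Walk.cons h SimpleGraph.Walk.nil)
            · exact ih k
        _ = k + 1 := by omega

lemma dist_getVert_right {V : Type*} {G : SimpleGraph V}
    {u v : V} (p : G.Walk u v) (k : ℕ) : G.dist (p.getVert k) v ≤ p.length - k := by
  induction p generalizing k with
  | nil => simp [SimpleGraph.Walk.getVert_of_length_le _ (by simp : (SimpleGraph.Walk.nil).length ≤ k), SimpleGraph.dist_self]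
  | cons h q ih =>
    cases k with
    | zero =>
      simpa using SimpleGraph.dist_le (SimpleGraph.Walk.cons h q)
    | succ k =>
      rw [SimpleGraph.Walk.getVert_cons_succ]
      simpa using ih k


open SimpleGraph Finset

/-- auxiliary graph: restriction of G to a finset N -/
def restrictGraph {V : Type*} [DecidableEq V] (G : SimpleGraph V) (N : Finset V) : SimpleGraph V where
  Adj x y := G.Adj x y ∧ x ∈ N ∧ y ∈ N
  symm := ⟨fun x y h => ⟨h.1.symm, h.2.2, h.2.1⟩⟩
  loopless := ⟨fun x h => G.loopless.irrefl x h.1⟩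

instance {V : Type*} [DecidableEq V] (G : SimpleGraph V) [DecidableRel G.Adj] (N : Finset V) :
    DecidableRel (restrictGraph G N).Adj := fun x y =>
  inferInstanceAs (Decidable (G.Adj x y ∧ x ∈ N ∧ y ∈ N))

lemma restrict_degree_eq {V : Type*} [Fintype V] [DecidableEq V] (G : SimpleGraph V)
    [DecidableRel G.Adj] (N : Finset V) (u : V) (hu : u ∈ N) :
    (restrictGraph G N).degree u = (G.neighborFinset u ∩ N).card := by
  rw [SimpleGraph.degree]
  congr 1
  ext x
  rw [SimpleGraph.mem_neighborFinset]
  simp [restrictGraph, SimpleGraph.mem_neighborFinset, hu, and_comm]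

lemma restrict_degree_zero {V : Type*} [Fintype V] [DecidableEq V] (G : SimpleGraph V)
    [DecidableRel G.Adj] (N : Finset V) (u : V) (hu : u ∉ N) :
    (restrictGraph G N).degree u = 0 := by
  rw [SimpleGraph.degree, Finset.card_eq_zero]
  ext x
  simp only [SimpleGraph.mem_neighborFinset, Finset.notMem_empty, iff_false]
  rintro ⟨-, h, -⟩
  exact hu h

lemma ball_card {V : Type*} [Fintype V] [DecidableEq V] (G : SimpleGraph V)
    [DecidableRel G.Adj] {δ : ℕ} (h3 : 3 ≤ δ) (hdeg : ∀ v, δ ≤ G.degree v)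
    (hc4 : ∀ a b c d : V, G.Adj a b → G.Adj b c → G.Adj c d → G.Adj d a → a ≠ c → b ≠ d → False)
    (c : V) :
    δ ^ 2 - 2 * (δ / 2) + 1 ≤ (Finset.univ.filter fun w => G.dist c w ≤ 2).card := by
  set N := G.neighborFinset c with hN
  set m := N.card with hm
  have hmδ : δ ≤ m := hdeg c
  set M : V → Finset V := fun u => G.neighborFinset u \ insert c N with hM
  set B : Finset V := insert c (N ∪ N.biUnion M) with hB
  -- t u : number of neighbors of u inside N
  set t : V → ℕ := fun u => (G.neighborFinset u ∩ N).card with ht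
  -- each t u ≤ 1 for u ∈ N
  have ht1 : ∀ u ∈ N, t u ≤ 1 := by
    intro u hu
    rw [Finset.card_le_one]
    intro x hx y hy
    by_contra hxy
    simp only [Finset.mem_inter, SimpleGraph.mem_neighborFinset, hN] at hx hy
    have hcu : G.Adj c u := by rwa [hN, SimpleGraph.mem_neighborFinset] at hu
    exact hc4 c x u y hx.2 hx.1.symm hy.1 hy.2.symm hcu.ne hxy
  -- M u disjointness
  have hMdisj : ∀ u ∈ N, ∀ u' ∈ N, u ≠ u' → Disjoint (M u) (M u') := by
    intro u hu u' hu' huu'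
    rw [Finset.disjoint_left]
    intro w hw hw'
    simp only [hM, Finset.mem_sdiff, SimpleGraph.mem_neighborFinset, Finset.mem_insert] at hw hw'
    rw [hN, SimpleGraph.mem_neighborFinset] at hu hu'
    push_neg at hw
    exact hc4 c u w u' hu hw.1 hw'.1.symm hu'.symm (fun h => hw.2.1 h.symm) huu'
  -- B is inside the ball
  have hBsub : B ⊆ Finset.univ.filter fun w => G.dist c w ≤ 2 := by
    intro w hw
    simp only [Finset.mem_filter, Finset.mem_univ, true_and]
    simp only [hB, Finset.mem_insert, Finset.mem_union, Finset.mem_biUnion] at hw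
    rcases hw with rfl | hw | ⟨u, hu, hw⟩
    · simp [SimpleGraph.dist_self]
    · rw [hN, SimpleGraph.mem_neighborFinset] at hw
      calc G.dist c w ≤ (SimpleGraph.Walk.cons hw SimpleGraph.Walk.nil).length :=
            SimpleGraph.dist_le _
        _ ≤ 2 := by simp
    · rw [hN, SimpleGraph.mem_neighborFinset] at hu
      simp only [hM, Finset.mem_sdiff, SimpleGraph.mem_neighborFinset] at hw
      calc G.dist c w ≤ (SimpleGraph.Walk.cons hu (SimpleGraph.Walk.cons hw.1 SimpleGraph.Walk.nil)).length :=
            SimpleGraph.dist_le _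
        _ ≤ 2 := by simp
  -- card of B
  have hcnotin : c ∉ N ∪ N.biUnion M := by
    simp only [Finset.mem_union, Finset.mem_biUnion, not_or, hN, hM]
    constructor
    · simp [SimpleGraph.mem_neighborFinset]
    · rintro ⟨u, hu, hc⟩
      simp at hc
  have hNdisjbi : Disjoint N (N.biUnion M) := by
    rw [Finset.disjoint_right]
    intro w hw
    simp only [Finset.mem_biUnion, hM, Finset.mem_sdiff, Finset.mem_insert] at hw
    obtain ⟨u, hu, hw1, hw2⟩ := hw
    intro hwN
    exact hw2 (Or.inr hwN)
  have hcardB : B.card = 1 + m + ∑ u ∈ N, (M u).card := by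
    rw [hB, Finset.card_insert_of_notMem hcnotin, Finset.card_union_of_disjoint hNdisjbi,
      Finset.card_biUnion hMdisj]
    omega
  -- lower bound on each M u
  have hMu : ∀ u ∈ N, δ ≤ (M u).card + 1 + t u := by
    intro u hu
    have h1 : δ ≤ (G.neighborFinset u).card := hdeg u
    have h2 : (G.neighborFinset u ∩ insert c N).card + (G.neighborFinset u \ insert c N).card
        = (G.neighborFinset u).card := Finset.card_inter_add_card_sdiff _ _
    have h3 : G.neighborFinset u ∩ insert c N ⊆ insert c (G.neighborFinset u ∩ N) := by
      intro x
      simp only [Finset.mem_inter, Finset.mem_insert]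
      tauto
    have h4 := Finset.card_le_card h3
    have h5 := Finset.card_insert_le c (G.neighborFinset u ∩ N)
    simp only [hM, ht]
    omega
  -- parity: sum of t is even
  have heven : Even (∑ u ∈ N, t u) := by
    have hsum : ∑ u ∈ N, t u = ∑ u, (restrictGraph G N).degree u := by
      calc ∑ u ∈ N, t u = ∑ u ∈ N, (restrictGraph G N).degree u :=
            Finset.sum_congr rfl fun u hu => (restrict_degree_eq G N u hu).symm
        _ = ∑ u, (restrictGraph G N).degree u :=
            Finset.sum_subset (Finset.subset_univ N)
              (fun u _ hu => restrict_degree_zero G N u hu)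
    rw [hsum, SimpleGraph.sum_degrees_eq_twice_card_edges]
    exact even_two_mul _
  have htsum : ∑ u ∈ N, t u ≤ 2 * (m / 2) := by
    have h1 : ∑ u ∈ N, t u ≤ ∑ u ∈ N, 1 := Finset.sum_le_sum ht1
    simp only [Finset.sum_const, smul_eq_mul, mul_one] at h1
    obtain ⟨j, hj⟩ := heven
    omega
  -- sum the M u bound
  have hsumM : m * δ ≤ (∑ u ∈ N, (M u).card) + m + ∑ u ∈ N, t u := by
    calc m * δ = ∑ _u ∈ N, δ := by rw [Finset.sum_const, smul_eq_mul]
      _ ≤ ∑ u ∈ N, ((M u).card + 1 + t u) := Finset.sum_le_sum hMu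
      _ = (∑ u ∈ N, (M u).card) + m + ∑ u ∈ N, t u := by
          rw [Finset.sum_add_distrib, Finset.sum_add_distrib, Finset.sum_const, smul_eq_mul, mul_one]
  have key : δ * δ + (m - δ) * 3 ≤ m * δ := by
    calc δ * δ + (m - δ) * 3 ≤ δ * δ + (m - δ) * δ := by gcongr
      _ = m * δ := by rw [← Nat.add_mul, Nat.add_sub_cancel' hmδ]
  have hfinal : δ ^ 2 - 2 * (δ / 2) + 1 ≤ B.card := by
    rw [pow_two]
    omega
  exact le_trans hfinal (Finset.card_le_card hBsub)

theorem stmt10 {V : Type*} [Fintype V] [DecidableEq V] (G : SimpleGraph V)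
    [DecidableRel G.Adj] (n δ : ℕ) (hn : Fintype.card V = n) (hδ : G.minDegree = δ) (hconn : G.Connected) (h3 : 3 ≤ δ) (hc4 : (∀ a b c d : V, G.Adj a b → G.Adj b c → G.Adj c d → G.Adj d a → a ≠ c → b ≠ d → False)) :
    (Finset.univ.sup fun v : V => Finset.univ.sup fun w : V => G.dist v w) ≤ 5 * n / (δ ^ 2 - 2 * (δ / 2) + 1) := by
  have hne : Nonempty V := hconn.nonempty
  have hdeg : ∀ v, δ ≤ G.degree v := fun v => hδ ▸ G.minDegree_le_degree v
  set K := δ ^ 2 - 2 * (δ / 2) + 1 with hK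
  have hKpos : 0 < K := by omega
  suffices H : ∀ u v : V, G.dist u v ≤ 5 * n / K by
    exact Finset.sup_le fun v _ => Finset.sup_le fun w _ => H v w
  intro u v
  set d := G.dist u v with hd
  obtain ⟨p, hp⟩ := hconn.exists_walk_length_eq_dist u v
  -- the balls
  set S : ℕ → Finset V := fun i => Finset.univ.filter fun w => G.dist (p.getVert (5 * i)) w ≤ 2
    with hS
  have hKS : ∀ i, K ≤ (S i).card := fun i => ball_card G h3 hdeg hc4 _
  -- centers are far apart
  have hfar : ∀ i j, i < j → j ≤ d / 5 → 5 ≤ G.dist (p.getVert (5 * i)) (p.getVert (5 * j)) := by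
    intro i j hij hj
    have h5j : 5 * j ≤ d := by
      have := Nat.div_mul_le_self d 5
      calc 5 * j ≤ 5 * (d / 5) := by omega
        _ ≤ d := by omega
    have h1 : G.dist u (p.getVert (5 * i)) ≤ 5 * i := dist_getVert_left hconn p _
    have h2 : G.dist (p.getVert (5 * j)) v ≤ d - 5 * j := by
      have := dist_getVert_right p (5 * j)
      rwa [hp] at this
    have h4 : d ≤ G.dist u (p.getVert (5 * i))
        + G.dist (p.getVert (5 * i)) (p.getVert (5 * j))
        + G.dist (p.getVert (5 * j)) v :=
      le_trans hconn.dist_triangle (by gcongr; exact hconn.dist_triangle)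
    omega
  -- disjointness of balls
  have hdisj : ∀ i ∈ Finset.range (d / 5 + 1), ∀ j ∈ Finset.range (d / 5 + 1), i ≠ j →
      Disjoint (S i) (S j) := by
    intro i hi j hj hij
    rw [Finset.disjoint_left]
    intro w hwi hwj
    simp only [hS, Finset.mem_filter, Finset.mem_univ, true_and] at hwi hwj
    have htri : G.dist (p.getVert (5 * i)) (p.getVert (5 * j)) ≤ 4 := by
      calc G.dist (p.getVert (5 * i)) (p.getVert (5 * j))
          ≤ G.dist (p.getVert (5 * i)) w + G.dist w (p.getVert (5 * j)) := hconn.dist_triangle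
        _ ≤ 2 + 2 := by
            gcongr
            rwa [SimpleGraph.dist_comm]
        _ = 4 := rfl
    simp only [Finset.mem_range] at hi hj
    rcases Nat.lt_or_ge i j with h | h
    · exact absurd htri (by have := hfar i j h (by omega); omega)
    · have hji : j < i := by omega
      have := hfar j i hji (by omega)
      rw [SimpleGraph.dist_comm] at htri
      omega
  -- counting
  have hcount : (d / 5 + 1) * K ≤ n := by
    calc (d / 5 + 1) * K = ∑ _i ∈ Finset.range (d / 5 + 1), K := by
          rw [Finset.sum_const, Finset.card_range, smul_eq_mul]
      _ ≤ ∑ i ∈ Finset.range (d / 5 + 1), (S i).card :=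
          Finset.sum_le_sum fun i _ => hKS i
      _ = ((Finset.range (d / 5 + 1)).biUnion S).card :=
          (Finset.card_biUnion hdisj).symm
      _ ≤ Fintype.card V := Finset.card_le_card (Finset.subset_univ _)
      _ = n := hn
  have h1 : d / 5 + 1 ≤ n / K := (Nat.le_div_iff_mul_le hKpos).mpr hcount
  have h2 : 5 * (n / K) ≤ 5 * n / K := Nat.mul_div_le_mul_div_assoc 5 n K
  generalize n / K = q at h1 h2
  generalize 5 * n / K = r at h2 ⊢
  omega
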